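/- Let ρ = (3-√5)/2, π₂(k) = kρ^k, P_u(r) = ρ^r(√5+1)/2, and define f(t) = ∑_{r≥1} P_u(r)π₂(r+t) + ∑_{r≥t+1} P_u(r)π₂(r-t) for t ≥ 1. Then E_w := ∑_{t≥1} f(t)·t = (7√5-3)/10. -/

import Mathlib

/-- For ρ = (3-√5)/2, π₂(k) = kρ^k, P_u(r) = ρ^r(√5+1)/2 and
f(t) = ∑_{r≥1} P_u(r)π₂(r+t) + ∑_{r≥t+1} P_u(r)π₂(r-t) (t ≥ 1), the expected
absolute upper offset is E_w = ∑_{t≥1} f(t)·t = (7√5-3)/10. -/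
theorem dcc_Ew :
    let ρ : ℝ := (3 - Real.sqrt 5) / 2
    let π₂ : ℕ → ℝ := fun k => (k : ℝ) * ρ ^ k
    let Pu : ℕ → ℝ := fun r => ρ ^ r * (Real.sqrt 5 + 1) / 2
    let f : ℕ → ℝ := fun t =>
      (∑' r : ℕ, Pu (r + 1) * π₂ (r + 1 + t)) +
      (∑' r : ℕ, Pu (r + t + 1) * π₂ (r + 1))
    HasSum (fun t : ℕ => f (t + 1) * ((t + 1 : ℕ) : ℝ)) ((7 * Real.sqrt 5 - 3) / 10) := by
  intro ρ π₂ Pu f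
  have hs2 : Real.sqrt 5 ^ 2 = 5 := Real.sq_sqrt (by norm_num)
  set s : ℝ := Real.sqrt 5 with hs
  have hsnn : (0:ℝ) ≤ s := Real.sqrt_nonneg 5
  have h2 : 2 < s := by nlinarith
  have h3 : s < 3 := by nlinarith
  have hρ0 : 0 < ρ := by simp only [ρ]; nlinarith
  have hρ1 : ρ < 1 := by simp only [ρ]; nlinarith
  have hρn : ‖ρ‖ < 1 := by rw [Real.norm_eq_abs, abs_of_pos hρ0]; exact hρ1
  have hqn : ‖ρ ^ 2‖ < 1 := by
    rw [Real.norm_eq_abs, abs_of_pos (by positivity)]; nlinarith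
  -- basic sums with ratio r, |r| < 1
  have lin : ∀ r : ℝ, ‖r‖ < 1 → HasSum (fun n : ℕ => ((n : ℝ) + 1) * r ^ n)
      (1 / (1 - r) ^ 2) := by
    intro r hr
    have := hasSum_choose_mul_geometric_of_norm_lt_one 1 hr
    simpa [Nat.choose_one_right] using this
  have quad : ∀ r : ℝ, ‖r‖ < 1 → HasSum (fun n : ℕ => ((n : ℝ) + 1) * ((n : ℝ) + 2) * r ^ n)
      (2 / (1 - r) ^ 3) := by
    intro r hr
    have h := (hasSum_choose_mul_geometric_of_norm_lt_one 2 hr).mul_left 2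
    have he : (fun n : ℕ => (2:ℝ) * (((n + 2).choose 2 : ℕ) * r ^ n)) =
        fun n : ℕ => ((n : ℝ) + 1) * ((n : ℝ) + 2) * r ^ n := by
      funext n
      rw [Nat.cast_choose_two]
      push_cast
      ring
    rw [he] at h
    rw [show (2:ℝ) / (1 - r) ^ 3 = 2 * (1 / (1 - r) ^ (2 + 1)) by ring]
    exact h
  have geo : ∀ r : ℝ, ‖r‖ < 1 → HasSum (fun n : ℕ => r ^ n) (1 / (1 - r)) := by
    intro r hr
    simpa [one_div] using hasSum_geometric_of_norm_lt_one hr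
  set q : ℝ := ρ ^ 2 with hqdef
  -- inner sums
  have hA : ∀ t : ℕ, HasSum (fun r : ℕ => Pu (r + 1) * π₂ (r + 1 + t))
      ((s + 1) / 2 * ρ ^ (t + 2) * (1 / (1 - q) ^ 2) +
        (s + 1) / 2 * ρ ^ (t + 2) * t * (1 / (1 - q))) := by
    intro t
    have h := ((lin q hqn).mul_left ((s + 1) / 2 * ρ ^ (t + 2))).add
      ((geo q hqn).mul_left ((s + 1) / 2 * ρ ^ (t + 2) * t))
    have he : (fun r : ℕ => Pu (r + 1) * π₂ (r + 1 + t)) =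
        fun r : ℕ => (s + 1) / 2 * ρ ^ (t + 2) * (((r : ℝ) + 1) * q ^ r) +
          (s + 1) / 2 * ρ ^ (t + 2) * t * q ^ r := by
      funext r
      simp only [Pu, π₂, hqdef, ← pow_mul]
      push_cast
      ring
    rw [he]
    exact h
  have hB : ∀ t : ℕ, HasSum (fun r : ℕ => Pu (r + t + 1) * π₂ (r + 1))
      ((s + 1) / 2 * ρ ^ (t + 2) * (1 / (1 - q) ^ 2)) := by
    intro t
    have h := (lin q hqn).mul_left ((s + 1) / 2 * ρ ^ (t + 2))
    have he : (fun r : ℕ => Pu (r + t + 1) * π₂ (r + 1)) =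
        fun r : ℕ => (s + 1) / 2 * ρ ^ (t + 2) * (((r : ℝ) + 1) * q ^ r) := by
      funext r
      simp only [Pu, π₂, hqdef, ← pow_mul]
      push_cast
      ring
    rw [he]
    exact h
  have hf : ∀ t : ℕ, f t = (s + 1) / 2 * ρ ^ (t + 2) * (2 / (1 - q) ^ 2) +
      (s + 1) / 2 * ρ ^ (t + 2) * t * (1 / (1 - q)) := by
    intro t
    simp only [f]
    rw [(hA t).tsum_eq, (hB t).tsum_eq]
    ring
  -- outer sum
  set A : ℝ := (s + 1) / 2 * ρ ^ 3 * (2 / (1 - q) ^ 2) with hAdef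
  set B : ℝ := (s + 1) / 2 * ρ ^ 3 * (1 / (1 - q)) with hBdef
  have H := ((lin ρ hρn).mul_left (A - B)).add ((quad ρ hρn).mul_left B)
  have he : (fun t : ℕ => f (t + 1) * ((t + 1 : ℕ) : ℝ)) =
      fun t : ℕ => (A - B) * (((t : ℝ) + 1) * ρ ^ t) +
        B * (((t : ℝ) + 1) * ((t : ℝ) + 2) * ρ ^ t) := by
    funext t
    rw [hf (t + 1)]
    simp only [hAdef, hBdef]
    push_cast
    ring
  rw [he]
  convert H using 1
  · rfl
  -- final numeric identity
  have h1ρ : 1 - ρ = (s - 1) / 2 := by simp only [ρ]; ring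
  have h1q : 1 - q = (3 * s - 5) / 2 := by
    simp only [hqdef, ρ]; nlinarith
  have hs1 : s - 1 ≠ 0 := by nlinarith
  have hq1 : 3 * s - 5 ≠ 0 := by nlinarith
  have hρs : ρ = (3 - s) / 2 := rfl
  simp only [hAdef, hBdef, h1ρ, h1q, hρs]
  field_simp
  rw [eq_div_iff (mul_ne_zero (pow_ne_zero _ (by nlinarith)) (pow_ne_zero _ (by nlinarith)))]
  linear_combination (-1596 + 1492*s + 60*s^2 - 372*s^3 + 96*s^4) * hs2
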